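/- For a real number p with 0 ≤ p < 1, let B_p be the 2×2 Hermitian matrix [[1 − 2p/3, p/3], [p/3, 2p/3]] and let C be the 2×2 Hermitian matrix [[1/3, 1/3], [1/3, 2/3]]. Then the largest eigenvalue of B_p is (1 + √(1 − (4/3)·p·(2 − (5/3)·p)))/2, the largest eigenvalue of C is (1 + √5/3)/2, and for every p with 0 ≤ p < 1/5 the largest eigenvalue of C is strictly smaller than the largest eigenvalue of B_p. (Hence an individual measurement outcome of Alice can make Bob's local state strictly more mixed.) -/

import Mathlib

open Matrix

lemma trace_eq_sum_eigs {A : Matrix (Fin 2) (Fin 2) ℂ} (hA : A.IsHermitian) :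
    A.trace = ∑ i, (hA.eigenvalues i : ℂ) := by
  conv_lhs => rw [hA.spectral_theorem, Unitary.conjStarAlgAut_apply]
  rw [Matrix.trace_mul_cycle]
  rw [show (star (hA.eigenvectorUnitary : Matrix (Fin 2) (Fin 2) ℂ)) *
      (hA.eigenvectorUnitary : Matrix (Fin 2) (Fin 2) ℂ) = 1 from
    Matrix.mem_unitaryGroup_iff'.mp hA.eigenvectorUnitary.2, one_mul, Matrix.trace_diagonal]
  rfl

lemma top_eig (μ : Fin 2 → ℝ) (hμ : Antitone μ) (t d : ℝ)
    (hsum : μ 0 + μ 1 = t) (hprod : μ 0 * μ 1 = d) :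
    μ 0 = (t + Real.sqrt (t ^ 2 - 4 * d)) / 2 := by
  have h01 : μ 1 ≤ μ 0 := hμ (by norm_num)
  have hs : Real.sqrt (t ^ 2 - 4 * d) = μ 0 - μ 1 := by
    rw [show t ^ 2 - 4 * d = (μ 0 - μ 1) ^ 2 by rw [← hsum, ← hprod]; ring]
    exact Real.sqrt_sq (by linarith)
  rw [hs]; linarith

lemma sum_prod_eigs {A : Matrix (Fin 2) (Fin 2) ℂ} (hA : A.IsHermitian)
    (μ : Fin 2 → ℝ) (e : Equiv.Perm (Fin 2)) (he : ∀ i, μ (e i) = hA.eigenvalues i)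
    (t d : ℝ) (ht : A.trace = (t : ℂ)) (hd : A.det = (d : ℂ)) :
    μ 0 + μ 1 = t ∧ μ 0 * μ 1 = d := by
  constructor
  · have h1 : ((μ 0 + μ 1 : ℝ) : ℂ) = ((t : ℝ) : ℂ) := by
      push_cast
      calc (μ 0 : ℂ) + μ 1 = ∑ i, (μ i : ℂ) := by simp [Fin.sum_univ_two]
        _ = ∑ i, (μ (e i) : ℂ) := (Equiv.sum_comp e fun i => (μ i : ℂ)).symm
        _ = ∑ i, (hA.eigenvalues i : ℂ) := by simp [he]
        _ = A.trace := (trace_eq_sum_eigs hA).symm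
        _ = t := ht
    exact_mod_cast h1
  · have h1 : ((μ 0 * μ 1 : ℝ) : ℂ) = ((d : ℝ) : ℂ) := by
      push_cast
      calc (μ 0 : ℂ) * μ 1 = ∏ i, (μ i : ℂ) := by simp [Fin.prod_univ_two]
        _ = ∏ i, (μ (e i) : ℂ) := (Equiv.prod_comp e fun i => (μ i : ℂ)).symm
        _ = ∏ i, (hA.eigenvalues i : ℂ) := by simp [he]
        _ = A.det := hA.det_eq_prod_eigenvalues.symm
        _ = d := hd
    exact_mod_cast h1

/-- An individual measurement outcome of Alice can make Bob's local state strictly more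
mixed: the largest eigenvalue of `B_p` is `(1 + √(1 - (4/3)p(2 - (5/3)p)))/2`, the
largest eigenvalue of `C` is `(1 + √5/3)/2`, and for `p < 1/5` the latter is strictly
smaller. -/
theorem measurement_can_increase_mixedness (p : ℝ) (hp0 : 0 ≤ p) (hp1 : p < 1)
    (B C : Matrix (Fin 2) (Fin 2) ℂ)
    (hBdef : B = !![((1 - 2 * p / 3 : ℝ) : ℂ), ((p / 3 : ℝ) : ℂ);
                    ((p / 3 : ℝ) : ℂ), ((2 * p / 3 : ℝ) : ℂ)])
    (hCdef : C = !![((1 / 3 : ℝ) : ℂ), ((1 / 3 : ℝ) : ℂ);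
                    ((1 / 3 : ℝ) : ℂ), ((2 / 3 : ℝ) : ℂ)])
    (hB : B.IsHermitian) (hC : C.IsHermitian)
    (μ ν : Fin 2 → ℝ) (hμ : Antitone μ) (hν : Antitone ν)
    (hμp : ∃ e : Equiv.Perm (Fin 2), ∀ i, μ (e i) = hB.eigenvalues i)
    (hνp : ∃ e : Equiv.Perm (Fin 2), ∀ i, ν (e i) = hC.eigenvalues i) :
    μ 0 = (1 + Real.sqrt (1 - 4 / 3 * p * (2 - 5 / 3 * p))) / 2 ∧
    ν 0 = (1 + Real.sqrt 5 / 3) / 2 ∧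
    (p < 1 / 5 → ν 0 < μ 0) := by
  obtain ⟨e, he⟩ := hμp
  obtain ⟨f, hf⟩ := hνp
  have hBt : B.trace = ((1 : ℝ) : ℂ) := by
    rw [hBdef, Matrix.trace_fin_two_of]; push_cast; ring
  have hBd : B.det = ((2 * p / 3 - 5 * p ^ 2 / 9 : ℝ) : ℂ) := by
    rw [hBdef, Matrix.det_fin_two_of]; push_cast; ring
  have hCt : C.trace = ((1 : ℝ) : ℂ) := by
    rw [hCdef, Matrix.trace_fin_two_of]; push_cast; ring
  have hCd : C.det = ((1 / 9 : ℝ) : ℂ) := by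
    rw [hCdef, Matrix.det_fin_two_of]; push_cast; ring
  obtain ⟨hμs, hμd⟩ := sum_prod_eigs hB μ e he _ _ hBt hBd
  obtain ⟨hνs, hνd⟩ := sum_prod_eigs hC ν f hf _ _ hCt hCd
  have hμ0 : μ 0 = (1 + Real.sqrt (1 - 4 / 3 * p * (2 - 5 / 3 * p))) / 2 := by
    rw [top_eig μ hμ _ _ hμs hμd]
    norm_num
    congr 2
    ring
  have hν0 : ν 0 = (1 + Real.sqrt 5 / 3) / 2 := by
    rw [top_eig ν hν _ _ hνs hνd]
    have h59 : (1 : ℝ) ^ 2 - 4 * (1 / 9) = (Real.sqrt 5 / 3) ^ 2 := by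
      rw [div_pow, Real.sq_sqrt (by norm_num : (5:ℝ) ≥ 0)]; norm_num
    rw [h59, Real.sqrt_sq (by positivity)]
  refine ⟨hμ0, hν0, fun hp5 => ?_⟩
  rw [hμ0, hν0]
  have key : Real.sqrt 5 / 3 < Real.sqrt (1 - 4 / 3 * p * (2 - 5 / 3 * p)) := by
    have h1 : Real.sqrt 5 / 3 = Real.sqrt (5 / 9) := by
      rw [show (5:ℝ)/9 = (Real.sqrt 5 / 3)^2 by
        rw [div_pow, Real.sq_sqrt (by norm_num : (5:ℝ) ≥ 0)]; norm_num,
        Real.sqrt_sq (by positivity)]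
    rw [h1]
    apply Real.sqrt_lt_sqrt (by norm_num)
    nlinarith [mul_pos (by linarith : (0:ℝ) < 1/5 - p) (by linarith : (0:ℝ) < 1 - p)]
  linarith
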